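/- arXiv:2412.01143 — 2 statements merged into one kernel-verified Lean document; each statement's English description precedes it below -/
import Mathlib

section
/- Let G be a simple graph on vertex set V, let K ⊆ V be a clique in G with |K| = k (every two distinct vertices of K are adjacent in G), and let W ⊆ V ∖ K be a set such that every vertex of W is adjacent in G to every vertex of K. Set U = K ∪ W. Then for every A ⊆ V with U ∩ A ≠ ∅ and U ∖ A ≠ ∅, the number of edges of G with one endpoint in A and the other in V ∖ A is at least k − 1; moreover, if W ≠ ∅ then this number is at least k. -/
/-- The set of edges of `G` crossing the cut `(A, V \ A)`. -/
def cutEdges {V : Type*} (G : SimpleGraph V) (A : Set V) : Set (Sym2 V) :=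
  {e | e ∈ G.edgeSet ∧ ∃ u v, u ∈ A ∧ v ∉ A ∧ e = s(u, v)}

/-- Let `K` be a clique of size `k` in a simple graph `G`, and let `W` be a
set of vertices outside `K` each adjacent to every vertex of `K`.  Then every cut
`(A, V∖A)` separating `U = K ∪ W` has at least `k − 1` crossing edges, and at least `k`
crossing edges if `W` is nonempty. -/
theorem stmt4 {V : Type*} [Fintype V] (G : SimpleGraph V)
    (K W : Set V) (k : ℕ) (hKcard : K.ncard = k)
    (hclique : ∀ u ∈ K, ∀ v ∈ K, u ≠ v → G.Adj u v)
    (hWK : W ⊆ Kᶜ)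
    (hWadj : ∀ w ∈ W, ∀ v ∈ K, G.Adj w v) :
    ∀ A : Set V, ((K ∪ W) ∩ A).Nonempty → ((K ∪ W) \ A).Nonempty →
      k - 1 ≤ (cutEdges G A).ncard ∧
      (W.Nonempty → k ≤ (cutEdges G A).ncard) := by
  classical
  intro A hA hB
  obtain ⟨a, haU, haA⟩ := hA
  obtain ⟨b, hbU, hbA⟩ := hB
  -- adjacency between a vertex of K and a distinct vertex of K ∪ W
  have hadj : ∀ x ∈ K, ∀ y ∈ K ∪ W, x ≠ y → G.Adj x y := by
    intro x hx y hy hxy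
    rcases hy with hy | hy
    · exact hclique x hx y hy hxy
    · exact (hWadj y hy x hx).symm
  have key : ∀ a ∈ (K ∪ W) ∩ A, ∀ b ∈ (K ∪ W) \ A, ∀ S : Set V, S ⊆ K →
      (a ∉ S ∨ b ∉ S) → S.ncard ≤ (cutEdges G A).ncard := by
    rintro a ⟨haU, haA⟩ b ⟨hbU, hbA⟩ S hSK hab
    set f : V → Sym2 V := fun x => if x ∈ A then s(x, b) else s(x, a) with hf
    have hmem : ∀ x ∈ S, f x ∈ cutEdges G A := by
      intro x hx
      by_cases hxA : x ∈ A
      · have hxb : x ≠ b := fun h => hbA (h ▸ hxA)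
        have := hadj x (hSK hx) b hbU hxb
        refine ⟨?_, x, b, hxA, hbA, by simp [hf, hxA]⟩
        simpa [hf, hxA] using this
      · have hxa : x ≠ a := fun h => hxA (h ▸ haA)
        have := hadj x (hSK hx) a haU hxa
        refine ⟨?_, a, x, haA, hxA, by simp [hf, hxA, Sym2.eq_swap]⟩
        simpa [hf, hxA] using this
    have hinj : Set.InjOn f S := by
      intro x hx y hy hxy
      by_cases hxA : x ∈ A <;> by_cases hyA : y ∈ A
      · simp only [hf, if_pos hxA, if_pos hyA, Sym2.eq, Sym2.rel_iff', Prod.mk.injEq, Prod.swap_prod_mk] at hxy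
        rcases hxy with ⟨h, _⟩ | ⟨h1, h2⟩
        · exact h
        · exact absurd (h1 ▸ hxA) hbA
      · exfalso
        simp only [hf, if_pos hxA, if_neg hyA, Sym2.eq, Sym2.rel_iff', Prod.mk.injEq, Prod.swap_prod_mk] at hxy
        rcases hxy with ⟨h1, h2⟩ | ⟨h1, h2⟩
        · exact hyA (h1 ▸ hxA)
        · rcases hab with h | h
          · exact h (h1 ▸ hx)
          · exact h (h2.symm ▸ hy)
      · exfalso
        simp only [hf, if_neg hxA, if_pos hyA, Sym2.eq, Sym2.rel_iff', Prod.mk.injEq, Prod.swap_prod_mk] at hxy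
        rcases hxy with ⟨h1, h2⟩ | ⟨h1, h2⟩
        · exact hxA (h1 ▸ hyA)
        · rcases hab with h | h
          · exact h (h2.symm ▸ hy)
          · exact h (h1 ▸ hx)
      · simp only [hf, if_neg hxA, if_neg hyA, Sym2.eq, Sym2.rel_iff', Prod.mk.injEq, Prod.swap_prod_mk] at hxy
        rcases hxy with ⟨h, _⟩ | ⟨h1, h2⟩
        · exact h
        · exact absurd (h1.symm ▸ haA) hxA
    calc S.ncard = (f '' S).ncard := (Set.ncard_image_of_injOn hinj).symm
      _ ≤ (cutEdges G A).ncard :=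
        Set.ncard_le_ncard (Set.image_subset_iff.mpr hmem) (Set.toFinite _)
  constructor
  · have h1 : (K \ {a}).ncard ≤ (cutEdges G A).ncard :=
      key a ⟨haU, haA⟩ b ⟨hbU, hbA⟩ (K \ {a}) Set.diff_subset (Or.inl (by simp))
    have h2 : K.ncard ≤ (K \ {a}).ncard + 1 := by
      have : K ⊆ (K \ {a}) ∪ {a} := by
        intro x hx; by_cases hxa : x = a
        · exact Or.inr (by simp [hxa])
        · exact Or.inl ⟨hx, by simp [hxa]⟩
      calc K.ncard ≤ ((K \ {a}) ∪ {a}).ncard := Set.ncard_le_ncard this (Set.toFinite _)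
        _ ≤ (K \ {a}).ncard + ({a} : Set V).ncard := Set.ncard_union_le _ _
        _ = (K \ {a}).ncard + 1 := by simp
    omega
  · rintro ⟨w, hw⟩
    by_cases hwA : w ∈ A
    · have := key w ⟨Or.inr hw, hwA⟩ b ⟨hbU, hbA⟩ K le_rfl (Or.inl (hWK hw))
      omega
    · have := key a ⟨haU, haA⟩ w ⟨Or.inr hw, hwA⟩ K le_rfl (Or.inr (hWK hw))
      omega
end

section
/- Let G be a simple graph on a vertex set V with |V| = n, and let S satisfy ∅ ⊂ S ⊂ V and |E_G(S, V∖S)| ≤ n. Let C₁ and C₂ be new disjoint vertex sets, disjoint from V, with |C₁| = |C₂| = 2n, and define the simple graph G' on vertex set V ∪ C₁ ∪ C₂ whose edge set consists of: all edges of G; all pairs of distinct vertices within C₁; all pairs of distinct vertices within C₂; all pairs {u, v} with u ∈ C₁ and v ∈ S; and all pairs {u, v} with u ∈ C₂ and v ∈ V∖S. Then the minimum cut value of G' equals |E_G(S, V∖S)|, and it is attained by the cut (C₁ ∪ S, C₂ ∪ (V∖S)). -/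
/-- The augmented graph `G'` on `V ⊕ (C₁ ⊕ C₂)` with `C₁ = C₂ = Fin (2n)`:
all edges of `G`; cliques on `C₁` and on `C₂`; all edges between `C₁` and `S`;
all edges between `C₂` and `V ∖ S`. -/
def extGraph {V : Type*} (n : ℕ) (G : SimpleGraph V) (S : Set V) :
    SimpleGraph (V ⊕ (Fin (2 * n) ⊕ Fin (2 * n))) :=
  SimpleGraph.fromRel (fun x y =>
    match x, y with
    | Sum.inl u, Sum.inl v => G.Adj u v
    | Sum.inr (Sum.inl _), Sum.inr (Sum.inl _) => True
    | Sum.inr (Sum.inr _), Sum.inr (Sum.inr _) => True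
    | Sum.inr (Sum.inl _), Sum.inl v => v ∈ S
    | Sum.inr (Sum.inr _), Sum.inl v => v ∉ S
    | _, _ => False)

section Aux

lemma ncard_prod' {α β : Type*} (s : Set α) (t : Set β) :
    (s ×ˢ t).ncard = s.ncard * t.ncard := by
  rw [← Nat.card_coe_set_eq, ← Nat.card_coe_set_eq, ← Nat.card_coe_set_eq,
    Nat.card_congr (Equiv.Set.prod s t), Nat.card_prod]

lemma cutEdges_compl {V : Type*} (G : SimpleGraph V) (A : Set V) :
    cutEdges G Aᶜ = cutEdges G A := by
  ext e
  constructor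
  · rintro ⟨he, u, v, hu, hv, rfl⟩
    exact ⟨he, v, u, by simpa using hv, hu, Sym2.eq_swap⟩
  · rintro ⟨he, u, v, hu, hv, rfl⟩
    exact ⟨he, v, u, hv, by simpa using hu, Sym2.eq_swap⟩

/-- Injection principle: a set of ordered crossing pairs gives a lower bound on the
number of cut edges. -/
lemma pairs_le {W : Type*} [Finite W] (G' : SimpleGraph W) (A : Set W) (P : Set (W × W))
    (hP : ∀ p ∈ P, G'.Adj p.1 p.2 ∧ p.1 ∈ A ∧ p.2 ∉ A) :
    P.ncard ≤ (cutEdges G' A).ncard := by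
  have hinj : Set.InjOn (fun p : W × W => s(p.1, p.2)) P := by
    rintro ⟨u, v⟩ h ⟨u', v'⟩ h' heq
    obtain ⟨h1, h2, h3⟩ := hP _ h
    obtain ⟨h1', h2', h3'⟩ := hP _ h'
    simp only [Sym2.eq, Sym2.rel_iff', Prod.mk.injEq, Prod.swap_prod_mk] at heq
    rcases heq with ⟨rfl, rfl⟩ | ⟨rfl, rfl⟩
    · rfl
    · exact absurd h2 h3'
  calc P.ncard = ((fun p : W × W => s(p.1, p.2)) '' P).ncard :=
        (Set.ncard_image_of_injOn hinj).symm
    _ ≤ (cutEdges G' A).ncard := by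
        refine Set.ncard_le_ncard ?_ (Set.toFinite _)
        rintro e ⟨⟨u, v⟩, hp, rfl⟩
        obtain ⟨h1, h2, h3⟩ := hP _ hp
        exact ⟨h1, u, v, h2, h3, rfl⟩

variable {V : Type*} {n : ℕ} {G : SimpleGraph V} {S : Set V}

lemma ext_adj_c1 {c c' : Fin (2 * n)} (h : c ≠ c') :
    (extGraph n G S).Adj (Sum.inr (Sum.inl c)) (Sum.inr (Sum.inl c')) := by
  rw [extGraph, SimpleGraph.fromRel_adj]
  exact ⟨by simp [h], Or.inl trivial⟩

lemma ext_adj_c2 {c c' : Fin (2 * n)} (h : c ≠ c') :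
    (extGraph n G S).Adj (Sum.inr (Sum.inr c)) (Sum.inr (Sum.inr c')) := by
  rw [extGraph, SimpleGraph.fromRel_adj]
  exact ⟨by simp [h], Or.inl trivial⟩

lemma ext_adj_c1S {c : Fin (2 * n)} {v : V} (h : v ∈ S) :
    (extGraph n G S).Adj (Sum.inr (Sum.inl c)) (Sum.inl v) := by
  rw [extGraph, SimpleGraph.fromRel_adj]
  exact ⟨by simp, Or.inl h⟩

lemma ext_adj_c2S {c : Fin (2 * n)} {v : V} (h : v ∉ S) :
    (extGraph n G S).Adj (Sum.inr (Sum.inr c)) (Sum.inl v) := by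
  rw [extGraph, SimpleGraph.fromRel_adj]
  exact ⟨by simp, Or.inl h⟩

lemma ext_adj_V {u v : V} (h : G.Adj u v) :
    (extGraph n G S).Adj (Sum.inl u) (Sum.inl v) := by
  rw [extGraph, SimpleGraph.fromRel_adj]
  exact ⟨by simp [h.ne], Or.inl h⟩

end Aux

/-- If `G` is a simple graph on `n` vertices, `∅ ⊂ S ⊂ V` and
`|E_G(S, V∖S)| ≤ n`, then the minimum cut value of the augmented graph `G'`
equals `|E_G(S, V∖S)|`, and it is attained by the cut `(C₁ ∪ S, C₂ ∪ (V∖S))`. -/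
theorem stmt5 {V : Type*} [Fintype V] (n : ℕ) (hn : Fintype.card V = n)
    (G : SimpleGraph V) (S : Set V) (hS : S.Nonempty) (hSc : Sᶜ.Nonempty)
    (hcut : (cutEdges G S).ncard ≤ n) :
    IsLeast {k : ℕ | ∃ A : Set (V ⊕ (Fin (2 * n) ⊕ Fin (2 * n))),
        A.Nonempty ∧ Aᶜ.Nonempty ∧ k = (cutEdges (extGraph n G S) A).ncard}
      ((cutEdges G S).ncard) ∧
    (cutEdges (extGraph n G S)
        (Sum.inl '' S ∪ Sum.inr '' (Sum.inl '' (Set.univ : Set (Fin (2 * n)))))).ncard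
      = (cutEdges G S).ncard := by
  classical
  set W := V ⊕ (Fin (2 * n) ⊕ Fin (2 * n)) with hW
  set G' := extGraph n G S with hG'
  set A₀ : Set W := Sum.inl '' S ∪ Sum.inr '' (Sum.inl '' (Set.univ : Set (Fin (2 * n))))
    with hA₀
  obtain ⟨s₀, hs₀⟩ := hS
  obtain ⟨t₀, ht₀⟩ := hSc
  have hn1 : 1 ≤ n := by
    rw [← hn]
    exact Fintype.card_pos_iff.mpr ⟨s₀⟩
  have i1inj : Function.Injective (fun c : Fin (2 * n) => (Sum.inr (Sum.inl c) : W)) :=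
    fun a b h => by simpa using h
  have i2inj : Function.Injective (fun c : Fin (2 * n) => (Sum.inr (Sum.inr c) : W)) :=
    fun a b h => by simpa using h
  -- star lemma: a vertex outside `B` adjacent to 2n vertices inside `B`
  have key_star : ∀ (B : Set W) (x : W) (j : Fin (2 * n) → W), Function.Injective j →
      (∀ c, G'.Adj (j c) x) → (∀ c, j c ∈ B) → x ∉ B →
      (cutEdges G S).ncard ≤ (cutEdges G' B).ncard := by
    intro B x j hjinj hadj hin hout
    refine le_trans ?_ (pairs_le G' B ((j '' Set.univ) ×ˢ {x}) ?_)
    · rw [ncard_prod', Set.ncard_image_of_injective _ hjinj, Set.ncard_univ,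
        Set.ncard_singleton, Nat.card_eq_fintype_card, Fintype.card_fin, mul_one]
      omega
    · rintro ⟨u, y⟩ ⟨⟨c, -, rfl⟩, hy⟩
      obtain rfl : y = x := hy
      exact ⟨hadj c, hin c, hout⟩
  -- split lemma: a clique of size 2n is split by `B`
  have key_split : ∀ (B : Set W) (j : Fin (2 * n) → W), Function.Injective j →
      (∀ c c', c ≠ c' → G'.Adj (j c) (j c')) →
      {c | j c ∈ B}.Nonempty → {c | j c ∈ B}ᶜ.Nonempty →
      (cutEdges G S).ncard ≤ (cutEdges G' B).ncard := by
    intro B j hjinj hadj h1 h2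
    set T : Set (Fin (2 * n)) := {c | j c ∈ B} with hT
    refine le_trans ?_ (pairs_le G' B ((j '' T) ×ˢ (j '' Tᶜ)) ?_)
    · rw [ncard_prod', Set.ncard_image_of_injective _ hjinj,
        Set.ncard_image_of_injective _ hjinj]
      have hsum : T.ncard + Tᶜ.ncard = 2 * n := by
        rw [Set.ncard_add_ncard_compl, Nat.card_eq_fintype_card, Fintype.card_fin]
      have ha : 1 ≤ T.ncard := (Set.ncard_pos (Set.toFinite _)).mpr h1
      have hb : 1 ≤ Tᶜ.ncard := (Set.ncard_pos (Set.toFinite _)).mpr h2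
      nlinarith [hcut, hn1, ha, hb, hsum]
    · rintro ⟨u, y⟩ ⟨⟨c, hc, rfl⟩, ⟨c', hc', rfl⟩⟩
      have hne : c ≠ c' := by rintro rfl; exact hc' hc
      exact ⟨hadj c c' hne, hc, hc'⟩
  -- the main lemma for the case C₁ ⊆ B, C₂ ∩ B = ∅
  have key_main : ∀ (B : Set W),
      (∀ c : Fin (2 * n), (Sum.inr (Sum.inl c) : W) ∈ B) →
      (∀ c : Fin (2 * n), (Sum.inr (Sum.inr c) : W) ∉ B) →
      (cutEdges G S).ncard ≤ (cutEdges G' B).ncard := by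
    intro B h1 h2
    by_cases hTS : {v : V | (Sum.inl v : W) ∈ B} = S
    · -- the cut restricted to V is exactly S : inject the cut edges of G
      have himg : Sym2.map (Sum.inl : V → W) '' cutEdges G S ⊆ cutEdges G' B := by
        rintro e ⟨e', ⟨he', u, v, hu, hv, rfl⟩, rfl⟩
        refine ⟨ext_adj_V (S := S) he', Sum.inl u, Sum.inl v, ?_, ?_, rfl⟩
        · rw [← hTS] at hu; exact hu
        · rw [← hTS] at hv; exact hv
      calc (cutEdges G S).ncard
          = (Sym2.map (Sum.inl : V → W) '' cutEdges G S).ncard :=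
            (Set.ncard_image_of_injective _ (Sym2.map.injective Sum.inl_injective)).symm
        _ ≤ (cutEdges G' B).ncard := Set.ncard_le_ncard himg (Set.toFinite _)
    · -- some vertex of V is on the "wrong" side
      have : ∃ v : V, (v ∈ S ∧ (Sum.inl v : W) ∉ B) ∨ (v ∉ S ∧ (Sum.inl v : W) ∈ B) := by
        by_contra hcon
        push_neg at hcon
        apply hTS
        ext v
        obtain ⟨hv1, hv2⟩ := hcon v
        constructor
        · intro hv
          by_contra hvS
          exact (hv2 hvS) hv
        · intro hv
          exact hv1 hv
      obtain ⟨v, ⟨hvS, hvB⟩ | ⟨hvS, hvB⟩⟩ := this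
      · exact key_star B (Sum.inl v) _ i1inj (fun c => ext_adj_c1S hvS) h1 hvB
      · rw [← cutEdges_compl G' _]
        exact key_star Bᶜ (Sum.inl v) _ i2inj (fun c => ext_adj_c2S hvS)
          (fun c => h2 c) (by simpa using hvB)
  -- lemma for the case C₁ ∪ C₂ ⊆ B
  have key_all : ∀ (B : Set W),
      (∀ c : Fin (2 * n), (Sum.inr (Sum.inl c) : W) ∈ B) →
      (∀ c : Fin (2 * n), (Sum.inr (Sum.inr c) : W) ∈ B) →
      Bᶜ.Nonempty →
      (cutEdges G S).ncard ≤ (cutEdges G' B).ncard := by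
    intro B h1 h2 ⟨x, hx⟩
    obtain (v | (c | c)) := x
    · by_cases hvS : v ∈ S
      · exact key_star B (Sum.inl v) _ i1inj (fun c => ext_adj_c1S hvS) h1 hx
      · exact key_star B (Sum.inl v) _ i2inj (fun c => ext_adj_c2S hvS) h2 hx
    · exact absurd (h1 c) hx
    · exact absurd (h2 c) hx
  -- the canonical cut has exactly the cut edges of G (mapped into W)
  have himg : cutEdges G' A₀ = Sym2.map (Sum.inl : V → W) '' cutEdges G S := by
    ext e
    constructor
    · rintro ⟨he, u, v, hu, hv, rfl⟩
      rw [SimpleGraph.mem_edgeSet] at he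
      have hadj := he
      rw [hG', extGraph, SimpleGraph.fromRel_adj] at hadj
      obtain ⟨hne, hrel⟩ := hadj
      rcases hu with ⟨u', hu'S, rfl⟩ | ⟨y, ⟨c, -, rfl⟩, rfl⟩
      · -- u = inl u', u' ∈ S
        obtain (v' | (c | c)) := v
        · -- v = inl v', v' ∉ S
          have hv'S : v' ∉ S := fun h => hv (Or.inl ⟨v', h, rfl⟩)
          have hGadj : G.Adj u' v' := by
            rcases hrel with h | h
            · exact h
            · exact h.symm
          exact ⟨s(u', v'), ⟨hGadj, u', v', hu'S, hv'S, rfl⟩, rfl⟩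
        · exact absurd (Or.inr ⟨Sum.inl c, ⟨c, trivial, rfl⟩, rfl⟩) hv
        · -- adjacency inl u' ~ inr inr c requires u' ∉ S
          exfalso
          rcases hrel with h | h
          · exact h
          · exact h hu'S
      · -- u = inr inl c ∈ C₁, v ∉ A₀
        exfalso
        obtain (v' | (c' | c')) := v
        · have hv'S : v' ∉ S := fun h => hv (Or.inl ⟨v', h, rfl⟩)
          rcases hrel with h | h
          · exact hv'S h
          · exact h
        · exact hv (Or.inr ⟨Sum.inl c', ⟨c', trivial, rfl⟩, rfl⟩)
        · rcases hrel with h | h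
          · exact h
          · exact h
    · rintro ⟨e', ⟨he', u, v, hu, hv, rfl⟩, rfl⟩
      rw [SimpleGraph.mem_edgeSet] at he'
      refine ⟨ext_adj_V (S := S) he', Sum.inl u, Sum.inl v, Or.inl ⟨u, hu, rfl⟩, ?_, rfl⟩
      rintro (⟨v', hv', hvv⟩ | ⟨y, -, hyy⟩)
      · obtain rfl : v' = v := Sum.inl_injective hvv
        exact hv hv'
      · cases hyy
  have hA₀card : (cutEdges G' A₀).ncard = (cutEdges G S).ncard := by
    rw [himg, Set.ncard_image_of_injective _ (Sym2.map.injective Sum.inl_injective)]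
  refine ⟨⟨⟨A₀, ⟨Sum.inl s₀, Or.inl ⟨s₀, hs₀, rfl⟩⟩, ⟨Sum.inl t₀, ?_⟩, hA₀card.symm⟩, ?_⟩,
    hA₀card⟩
  · rintro (⟨v', hv', hvv⟩ | ⟨y, -, hyy⟩)
    · obtain rfl : v' = t₀ := Sum.inl_injective hvv
      exact ht₀ hv'
    · cases hyy
  · -- lower bound
    rintro k ⟨A, hA, hAc, rfl⟩
    set T1 : Set (Fin (2 * n)) := {c | (Sum.inr (Sum.inl c) : W) ∈ A} with hT1
    set T2 : Set (Fin (2 * n)) := {c | (Sum.inr (Sum.inr c) : W) ∈ A} with hT2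
    by_cases h1 : T1.Nonempty ∧ T1ᶜ.Nonempty
    · exact key_split A _ i1inj (fun c c' h => ext_adj_c1 h) h1.1 h1.2
    by_cases h2 : T2.Nonempty ∧ T2ᶜ.Nonempty
    · exact key_split A _ i2inj (fun c c' h => ext_adj_c2 h) h2.1 h2.2
    -- T1 and T2 are each univ or empty
    have h1' : (∀ c, c ∈ T1) ∨ (∀ c, c ∉ T1) := by
      rcases Set.eq_empty_or_nonempty T1 with h | h
      · exact Or.inr (fun c hc => by rw [h] at hc; exact hc)
      rcases Set.eq_empty_or_nonempty T1ᶜ with h' | h'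
      · exact Or.inl (fun c => by
          by_contra hc
          exact absurd (Set.eq_empty_iff_forall_notMem.mp h' c) (fun hn => hn hc))
      · exact absurd ⟨h, h'⟩ h1
    have h2' : (∀ c, c ∈ T2) ∨ (∀ c, c ∉ T2) := by
      rcases Set.eq_empty_or_nonempty T2 with h | h
      · exact Or.inr (fun c hc => by rw [h] at hc; exact hc)
      rcases Set.eq_empty_or_nonempty T2ᶜ with h' | h'
      · exact Or.inl (fun c => by
          by_contra hc
          exact absurd (Set.eq_empty_iff_forall_notMem.mp h' c) (fun hn => hn hc))
      · exact absurd ⟨h, h'⟩ h2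
    rcases h1' with h1' | h1' <;> rcases h2' with h2' | h2'
    · exact key_all A h1' h2' hAc
    · exact key_main A h1' h2'
    · rw [← cutEdges_compl G' _]
      exact key_main Aᶜ (fun c => h1' c) (fun c hc => hc (h2' c))
    · rw [← cutEdges_compl G' _]
      exact key_all Aᶜ (fun c => h1' c) (fun c => h2' c)
        (by simpa using hA)
end
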